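/- Let φ: A → B be a ring homomorphism between commutative rings, with B reduced Noetherian having minimal primes p_1, ..., p_k, and suppose B is integrally closed in its total ring of fractions. If the conductor C of A in its integral closure Ā (taken in the total fraction ring of A) is not contained in φ^{-1}(p_i) for any i, then φ extends uniquely to a ring homomorphism φ̄: Ā → B. -/

import Mathlib

set_option maxHeartbeats 1000000


/-- Universal property of the normalization (algebraic version): let `φ : A → B` with `B`
reduced Noetherian and integrally closed in its total ring of fractions.  If the conductor
of `A` in its integral closure `Ā ⊆ tot A` is not contained in `φ⁻¹ p` for any minimal
prime `p` of `B`, then `φ` extends uniquely to `Ā → B`. -/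
theorem stmt_1 {A B : Type*} [CommRing A] [IsNoetherianRing A]
    [CommRing B] [IsNoetherianRing B] [IsReduced B]
    (φ : A →+* B)
    (hBic : integralClosure B (Localization (nonZeroDivisors B)) = ⊥)
    (hcond : ∀ p ∈ minimalPrimes B,
      ¬ ({g : A | ∀ h ∈ integralClosure A (Localization (nonZeroDivisors A)),
            ∃ a : A, algebraMap A (Localization (nonZeroDivisors A)) a =
              algebraMap A (Localization (nonZeroDivisors A)) g * h} ⊆ φ ⁻¹' (p : Set B))) :
    ∃! ψ : (integralClosure A (Localization (nonZeroDivisors A))) →+* B,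
      ψ.comp (algebraMap A (integralClosure A (Localization (nonZeroDivisors A)))) = φ := by
  set K := Localization (nonZeroDivisors A) with hK
  set L := Localization (nonZeroDivisors B) with hL
  have injK : Function.Injective (algebraMap A K) := IsFractionRing.injective A K
  have injL : Function.Injective (algebraMap B L) := IsFractionRing.injective B L
  -- the conductor as an ideal
  let C : Ideal A :=
    { carrier := {g : A | ∀ h ∈ integralClosure A K,
        ∃ a : A, algebraMap A K a = algebraMap A K g * h}
      add_mem' := by
        intro x y hx hy h hh
        obtain ⟨a, ha⟩ := hx h hh
        obtain ⟨b, hb⟩ := hy h hh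
        exact ⟨a + b, by rw [map_add, ha, hb, map_add]; ring⟩
      zero_mem' := by
        intro h hh
        exact ⟨0, by simp⟩
      smul_mem' := by
        intro c g hg h hh
        obtain ⟨a, ha⟩ := hg h hh
        exact ⟨c * a, by rw [map_mul, ha, smul_eq_mul, map_mul]; ring⟩ }
  -- prime avoidance: find g in the conductor with φ g avoiding all minimal primes
  have hfin : (minimalPrimes B).Finite := minimalPrimes.finite_of_isNoetherianRing B
  obtain ⟨g, hgC, hg⟩ : ∃ g ∈ C, ∀ p ∈ minimalPrimes B, φ g ∉ p := by
    by_contra hcon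
    push_neg at hcon
    have hsub : (C : Set A) ⊆ ⋃ p ∈ (↑hfin.toFinset : Set (Ideal B)), ↑(p.comap φ) := by
      intro x hx
      obtain ⟨p, hp, hmem⟩ := hcon x hx
      exact Set.mem_biUnion (hfin.mem_toFinset.2 hp) hmem
    have hp : ∀ p ∈ hfin.toFinset, p ≠ (⊥ : Ideal B) → p ≠ (⊥ : Ideal B) →
        (p.comap φ).IsPrime := by
      intro p hps _ _
      have hpmin : p ∈ minimalPrimes B := hfin.mem_toFinset.1 hps
      have : p.IsPrime := hpmin.1.1
      exact Ideal.IsPrime.comap φ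
    obtain ⟨p, hps, hle⟩ := (Ideal.subset_union_prime ⊥ ⊥ hp).1 hsub
    exact hcond p (hfin.mem_toFinset.1 hps) (fun x hx => hle hx)
  -- φ g is a nonzerodivisor of B
  have hgnzd : φ g ∈ nonZeroDivisors B := by
    rw [mem_nonZeroDivisors_iff_right]
    intro x hx
    have hmem : ∀ p ∈ minimalPrimes B, x ∈ p := by
      intro p hpmin
      have hprime : p.IsPrime := hpmin.1.1
      have : x * φ g ∈ p := by rw [hx]; exact p.zero_mem
      exact (hprime.mem_or_mem this).resolve_right (hg p hpmin)
    have hsinf : x ∈ sInf (minimalPrimes B) := Ideal.mem_sInf.2 fun {J} hJ => hmem J hJ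
    have : sInf (minimalPrimes B) = (⊥ : Ideal B) := by
      rw [show minimalPrimes B = (⊥ : Ideal B).minimalPrimes from rfl,
        Ideal.sInf_minimalPrimes, show (⊥ : Ideal B).radical = nilradical B from rfl,
        nilradical_eq_zero]
      rfl
    rwa [this] at hsinf
  -- numerator function: for each h in the integral closure, the unique a with a = g·h in K
  have haex : ∀ h : integralClosure A K, ∃ a : A,
      algebraMap A K a = algebraMap A K g * (h : K) := fun h => hgC (h : K) h.2
  choose aa haa using haex
  -- properties of aa
  have aa_add : ∀ h₁ h₂, aa (h₁ + h₂) = aa h₁ + aa h₂ := by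
    intro h₁ h₂
    apply injK
    rw [haa, map_add, haa, haa]
    push_cast
    ring
  have aa_one : aa 1 = g := by
    apply injK
    rw [haa]
    push_cast
    ring
  have aa_mul : ∀ h₁ h₂, g * aa (h₁ * h₂) = aa h₁ * aa h₂ := by
    intro h₁ h₂
    apply injK
    rw [map_mul, map_mul, haa, haa, haa]
    push_cast
    ring
  have aa_alg : ∀ c : A, aa (algebraMap A (integralClosure A K) c) = g * c := by
    intro c
    apply injK
    rw [haa, map_mul]
    congr 1
  -- existence of the value: φ(aa h) / φ(g) lies in B
  have key : ∀ h : integralClosure A K, ∃ b : B, φ g * b = φ (aa h) := by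
    intro h
    obtain ⟨p, pmon, hp0⟩ := h.2
    set n := p.natDegree with hn
    -- the relation ∑ c_i g^(n-i) a^i = 0 holds in A
    have hzA : ∑ i ∈ Finset.range (n + 1), p.coeff i * g ^ (n - i) * aa h ^ i = 0 := by
      apply injK
      rw [map_sum, map_zero]
      have e1 : ∀ i ∈ Finset.range (n + 1),
          algebraMap A K (p.coeff i * g ^ (n - i) * aa h ^ i)
          = algebraMap A K g ^ n * (algebraMap A K (p.coeff i) * (h : K) ^ i) := by
        intro i hi
        have hin : i ≤ n := Nat.lt_succ_iff.mp (Finset.mem_range.mp hi)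
        calc algebraMap A K (p.coeff i * g ^ (n - i) * aa h ^ i)
            = algebraMap A K (p.coeff i) * algebraMap A K g ^ (n - i) *
              (algebraMap A K g * (h : K)) ^ i := by
              rw [map_mul, map_mul, map_pow, map_pow, haa h]
          _ = algebraMap A K (p.coeff i) *
              (algebraMap A K g ^ (n - i) * algebraMap A K g ^ i) * (h : K) ^ i := by
              rw [mul_pow]; ring
          _ = algebraMap A K g ^ n * (algebraMap A K (p.coeff i) * (h : K) ^ i) := by
              rw [← pow_add, Nat.sub_add_cancel hin]; ring
      rw [Finset.sum_congr rfl e1, ← Finset.mul_sum, ← Polynomial.eval₂_eq_sum_range, hp0,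
        mul_zero]
    -- the element φ(aa h)/φ(g) of L
    set u : L := algebraMap B L (φ g) with hu
    have huu : IsUnit u := IsLocalization.map_units L (⟨φ g, hgnzd⟩ : nonZeroDivisors B)
    set y : L := IsLocalization.mk' L (φ (aa h)) (⟨φ g, hgnzd⟩ : nonZeroDivisors B) with hy
    have hyu : u * y = algebraMap B L (φ (aa h)) := by
      rw [hu, hy, mul_comm]
      exact IsLocalization.mk'_spec L _ _
    -- y is integral over B
    have hyint : IsIntegral B y := by
      refine ⟨p.map φ, pmon.map φ, ?_⟩
      have hdeg : (p.map φ).natDegree < n + 1 :=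
        Nat.lt_succ_of_le Polynomial.natDegree_map_le
      rw [Polynomial.eval₂_eq_sum_range' (algebraMap B L) hdeg y]
      have hcancel : u ^ n * (∑ i ∈ Finset.range (n + 1),
          algebraMap B L ((p.map φ).coeff i) * y ^ i) = 0 := by
        rw [Finset.mul_sum]
        have e2 : ∀ i ∈ Finset.range (n + 1),
            u ^ n * (algebraMap B L ((p.map φ).coeff i) * y ^ i)
            = algebraMap B L (φ (p.coeff i * g ^ (n - i) * aa h ^ i)) := by
          intro i hi
          have hin : i ≤ n := Nat.lt_succ_iff.mp (Finset.mem_range.mp hi)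
          have : u ^ n * y ^ i = u ^ (n - i) * (u * y) ^ i := by
            rw [mul_pow, ← mul_assoc, ← pow_add, Nat.sub_add_cancel hin]
          calc u ^ n * (algebraMap B L ((p.map φ).coeff i) * y ^ i)
              = algebraMap B L ((p.map φ).coeff i) * (u ^ n * y ^ i) := by ring
            _ = algebraMap B L ((p.map φ).coeff i) * (u ^ (n - i) * (u * y) ^ i) := by
                rw [this]
            _ = algebraMap B L (φ (p.coeff i * g ^ (n - i) * aa h ^ i)) := by
                rw [hyu, Polynomial.coeff_map, hu]
                simp only [map_mul, map_pow]
                ring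
        rw [Finset.sum_congr rfl e2, ← map_sum, ← map_sum, hzA, map_zero, map_zero]
      have := huu.pow n
      obtain ⟨v, hv⟩ := this.exists_left_inv
      calc (∑ i ∈ Finset.range (n + 1), algebraMap B L ((p.map φ).coeff i) * y ^ i)
          = v * (u ^ n * (∑ i ∈ Finset.range (n + 1),
              algebraMap B L ((p.map φ).coeff i) * y ^ i)) := by
            rw [← mul_assoc, hv, one_mul]
        _ = 0 := by rw [hcancel, mul_zero]
    -- hence y lies in B
    have hyB : y ∈ integralClosure B L := hyint
    rw [hBic, Algebra.mem_bot] at hyB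
    obtain ⟨b, hb⟩ := hyB
    refine ⟨b, injL ?_⟩
    rw [map_mul, hb, hyu]
  choose bb hbb using key
  -- cancellation by φ g
  have cancel : ∀ x y : B, φ g * x = φ g * y → x = y := by
    intro x y hxy
    exact (mul_cancel_left_mem_nonZeroDivisors hgnzd).mp hxy
  -- bb is a ring homomorphism
  have bb_one : bb 1 = 1 := by
    apply cancel
    rw [hbb, aa_one, mul_one]
  have bb_mul : ∀ h₁ h₂, bb (h₁ * h₂) = bb h₁ * bb h₂ := by
    intro h₁ h₂
    apply cancel
    apply cancel
    calc φ g * (φ g * bb (h₁ * h₂)) = φ g * φ (aa (h₁ * h₂)) := by rw [hbb]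
      _ = φ (g * aa (h₁ * h₂)) := by rw [map_mul]
      _ = φ (aa h₁ * aa h₂) := by rw [aa_mul]
      _ = (φ g * bb h₁) * (φ g * bb h₂) := by rw [map_mul, hbb, hbb]
      _ = φ g * (φ g * (bb h₁ * bb h₂)) := by ring
  have bb_add : ∀ h₁ h₂, bb (h₁ + h₂) = bb h₁ + bb h₂ := by
    intro h₁ h₂
    apply cancel
    rw [hbb, aa_add, map_add, mul_add, hbb, hbb]
  have aa_zero : aa 0 = 0 := by
    apply injK
    rw [haa]
    push_cast
    ring
  have bb_zero : bb 0 = 0 := by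
    apply cancel
    rw [hbb, aa_zero, map_zero, mul_zero]
  -- the extension
  let ψ : (integralClosure A K) →+* B :=
    { toFun := bb
      map_one' := bb_one
      map_mul' := bb_mul
      map_zero' := bb_zero
      map_add' := bb_add }
  have hψ : ψ.comp (algebraMap A (integralClosure A K)) = φ := by
    ext c
    show bb (algebraMap A (integralClosure A K) c) = φ c
    apply cancel
    rw [hbb, aa_alg, map_mul]
  refine ⟨ψ, hψ, ?_⟩
  -- uniqueness
  intro ψ' hψ'
  ext h
  show ψ' h = bb h
  apply cancel
  have h1 : φ g = ψ' (algebraMap A (integralClosure A K) g) := by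
    rw [← hψ']; rfl
  have h2 : algebraMap A (integralClosure A K) g * h
      = algebraMap A (integralClosure A K) (aa h) := by
    apply Subtype.ext
    push_cast
    rw [← haa h]
  calc φ g * ψ' h = ψ' (algebraMap A (integralClosure A K) g * h) := by
        rw [map_mul, ← h1]
    _ = ψ' (algebraMap A (integralClosure A K) (aa h)) := by rw [h2]
    _ = φ (aa h) := by rw [← hψ']; rfl
    _ = φ g * bb h := (hbb h).symm
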